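/- (Proposition 1: error probabilities of the quantization scheme in the asymmetric setup with p0 = p1 = 1/2.) Let n be a positive integer, let S be a nonempty finite subset of (ZMod 2)^n (the decision region, i.e., coset-leader set, of the all-zero codeword of the quantizer), let N_0 = |S| and E_γ = #{x ∈ S : w(x) = γ} for 0 ≤ γ ≤ n. Let X be uniformly distributed on S, and under hypothesis H_h (h ∈ {0,1}) let Z be an independent random vector in (ZMod 2)^n with i.i.d. components each equal to 1 with probability c_h ∈ (0,1); set Y = X + Z. The decoder declares H_0 if and only if w(Y) ≤ λ_q, for a fixed integer threshold λ_q with 0 ≤ λ_q ≤ n. Then the Type-I error probability α = P(w(Y) > λ_q | H_0) and Type-II error probability β = P(w(Y) ≤ λ_q | H_1) satisfy α = 1 − (1/N_0) Σ_{λ=0}^{λ_q} Σ_{γ=0}^{n} Σ_{j=0}^{n} E_γ · N(γ, j, λ) · c_0^j (1−c_0)^{n−j} and β = (1/N_0) Σ_{λ=0}^{λ_q} Σ_{γ=0}^{n} Σ_{j=0}^{n} E_γ · N(γ, j, λ) · c_1^j (1−c_1)^{n−j}. -/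

import Mathlib

/-- `Ncoef n a j b` is the quantity `N(a,j,b)` from the paper:
`binom(a,u) * binom(n-a, j-u)` when `a + j - b = 2u` for some integer `u` with
`0 ≤ u ≤ min a j`, and `0` when no such `u` exists. -/
def Ncoef (n a j b : ℕ) : ℕ :=
  if b ≤ a + j ∧ 2 ∣ (a + j - b) ∧ (a + j - b) / 2 ≤ min a j then
    Nat.choose a ((a + j - b) / 2) * Nat.choose (n - a) (j - (a + j - b) / 2)
  else 0

open Finset
open scoped symmDiff

variable {n : ℕ}

def supp (z : Fin n → ZMod 2) : Finset (Fin n) := Finset.univ.filter (fun i => z i ≠ 0)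

lemma hn_supp (z : Fin n → ZMod 2) : hammingNorm z = (supp z).card := rfl

lemma supp_add (x z : Fin n → ZMod 2) : supp (x + z) = supp x ∆ supp z := by
  ext i
  have h : ∀ a b : ZMod 2, (a + b ≠ 0) ↔ ((a ≠ 0 ∧ ¬ b ≠ 0) ∨ (b ≠ 0 ∧ ¬ a ≠ 0)) := by decide
  simp only [supp, mem_filter, mem_univ, true_and, Finset.mem_symmDiff, Pi.add_apply, h]

lemma supp_card_le (z : Fin n → ZMod 2) : (supp z).card ≤ n := by
  simpa using card_le_card (subset_univ (supp z))

def ind (A : Finset (Fin n)) : Fin n → ZMod 2 := fun i => if i ∈ A then 1 else 0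

lemma supp_ind (A : Finset (Fin n)) : supp (ind A) = A := by
  ext i; simp [supp, ind]

lemma ind_supp (z : Fin n → ZMod 2) : ind (supp z) = z := by
  funext i
  have h : ∀ a : ZMod 2, (if a ≠ 0 then (1 : ZMod 2) else 0) = a := by decide
  simp [ind, supp, h]

lemma card_symmDiff' (s t : Finset (Fin n)) : (s ∆ t).card = (s \ t).card + (t \ s).card := by
  rw [symmDiff_def, sup_eq_union, card_union_of_disjoint (disjoint_sdiff_sdiff)]

lemma in_filter_facts (x z : Fin n → ZMod 2) (j lam : ℕ)
    (hz : hammingNorm z = j) (hxz : hammingNorm (x + z) = lam) :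
    lam ≤ hammingNorm x + j ∧ 2 ∣ (hammingNorm x + j - lam) ∧
      (hammingNorm x + j - lam) / 2 ≤ min (hammingNorm x) j ∧
      (supp z ∩ supp x).card = (hammingNorm x + j - lam) / 2 := by
  rw [hn_supp] at hz hxz ⊢
  rw [supp_add, card_symmDiff'] at hxz
  have h1 := card_inter_add_card_sdiff (supp z) (supp x)
  have h2 := card_inter_add_card_sdiff (supp x) (supp z)
  rw [inter_comm] at h2
  omega

lemma count_key2 (x : Fin n → ZMod 2) (j lam : ℕ)
    (hcond : lam ≤ hammingNorm x + j ∧ 2 ∣ (hammingNorm x + j - lam) ∧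
      (hammingNorm x + j - lam) / 2 ≤ min (hammingNorm x) j) :
    (Finset.univ.filter (fun z : Fin n → ZMod 2 =>
        hammingNorm z = j ∧ hammingNorm (x + z) = lam)).card
      = Nat.choose (hammingNorm x) ((hammingNorm x + j - lam) / 2) *
        Nat.choose (n - hammingNorm x) (j - (hammingNorm x + j - lam) / 2) := by
  set γ := hammingNorm x with hγ
  set u := (γ + j - lam) / 2 with hu
  set T := supp x with hT
  have hTc : T.card = γ := (hn_supp x).symm
  have htarget : ((T.powersetCard u) ×ˢ (Tᶜ.powersetCard (j - u))).card
      = γ.choose u * (n - γ).choose (j - u) := by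
    rw [card_product, card_powersetCard, card_powersetCard, card_compl, hTc]
    simp
  rw [← htarget]
  apply card_nbij' (fun z => (supp z ∩ T, supp z \ T)) (fun p => ind (p.1 ∪ p.2))
  · rintro z hz
    simp only [mem_coe, mem_filter, mem_univ, true_and] at hz
    obtain ⟨hzj, hzl⟩ := hz
    obtain ⟨h1, h2, h3, h4⟩ := in_filter_facts x z j lam hzj hzl
    rw [← hT] at h4
    have hc := card_inter_add_card_sdiff (supp z) T
    rw [← hn_supp, hzj] at hc
    simp only [mem_coe, mem_product, mem_powersetCard]
    refine ⟨⟨inter_subset_right, h4⟩, ?_, ?_⟩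
    · intro i hi
      simp only [mem_sdiff] at hi
      simp [mem_compl, hi.2]
    · omega
  · rintro ⟨A, B⟩ hp
    simp only [mem_coe, mem_product, mem_powersetCard] at hp
    obtain ⟨⟨hA, hAc⟩, hB, hBc⟩ := hp
    have hdisj : Disjoint A B := disjoint_compl_right.mono_left hA |>.mono_right hB
    have hsupp : supp (ind (A ∪ B)) = A ∪ B := supp_ind _
    have hBT : ∀ i ∈ B, i ∉ T := by
      intro i hi; have := hB hi; simpa [mem_compl] using this
    simp only [mem_coe, mem_filter, mem_univ, true_and]
    constructor
    · rw [hn_supp, hsupp, card_union_of_disjoint hdisj, hAc, hBc]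
      omega
    · rw [hn_supp, supp_add, ← hT, hsupp, card_symmDiff']
      have e1 : T \ (A ∪ B) = T \ A := by
        ext i
        simp only [mem_sdiff, mem_union]
        have := hBT i
        tauto
      have e2 : (A ∪ B) \ T = B := by
        ext i
        simp only [mem_sdiff, mem_union]
        have := hBT i
        have : i ∈ A → i ∈ T := fun h => hA h
        have := hBT i
        constructor
        · rintro ⟨h | h, hn⟩
          · exact absurd (hA h) hn
          · exact h
        · intro h; exact ⟨Or.inr h, hBT i h⟩
      rw [e1, e2, card_sdiff_of_subset hA, hTc, hAc, hBc]
      omega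
  · intro z _
    simp only
    rw [union_comm, sdiff_union_inter, ind_supp]
  · rintro ⟨A, B⟩ hp
    simp only [mem_coe, mem_product, mem_powersetCard] at hp
    obtain ⟨⟨hA, hAc⟩, hB, hBc⟩ := hp
    have hBT : ∀ i ∈ B, i ∉ T := by
      intro i hi; have := hB hi; simpa [mem_compl] using this
    have hsupp : supp (ind (A ∪ B)) = A ∪ B := supp_ind _
    simp only [hsupp, Prod.mk.injEq]
    constructor
    · ext i
      simp only [mem_inter, mem_union]
      have h1 : i ∈ A → i ∈ T := fun h => hA h
      have h2 := hBT i
      tauto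
    · ext i
      simp only [mem_sdiff, mem_union]
      have h1 : i ∈ A → i ∈ T := fun h => hA h
      have h2 := hBT i
      tauto

lemma count_key (x : Fin n → ZMod 2) (j lam : ℕ) :
    (Finset.univ.filter (fun z : Fin n → ZMod 2 =>
        hammingNorm z = j ∧ hammingNorm (x + z) = lam)).card
      = Ncoef n (hammingNorm x) j lam := by
  by_cases hcond : lam ≤ hammingNorm x + j ∧ 2 ∣ (hammingNorm x + j - lam) ∧
      (hammingNorm x + j - lam) / 2 ≤ min (hammingNorm x) j
  · rw [Ncoef, if_pos hcond]
    exact count_key2 x j lam hcond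
  · rw [Ncoef, if_neg hcond]
    rw [card_eq_zero, filter_eq_empty_iff]
    rintro z _ ⟨hz, hxz⟩
    exact hcond ⟨(in_filter_facts x z j lam hz hxz).1, (in_filter_facts x z j lam hz hxz).2.1,
      (in_filter_facts x z j lam hz hxz).2.2.1⟩

lemma hn_le (z : Fin n → ZMod 2) : hammingNorm z ≤ n := by
  rw [hn_supp]; exact supp_card_le z

lemma sum_z_le (x : Fin n → ZMod 2) (c : ℝ) (lq : ℕ) :
    ∑ z : Fin n → ZMod 2, (if hammingNorm (x + z) ≤ lq then
        c ^ hammingNorm z * (1 - c) ^ (n - hammingNorm z) else 0)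
      = ∑ lam ∈ range (lq + 1), ∑ j ∈ range (n + 1),
          (Ncoef n (hammingNorm x) j lam : ℝ) * c ^ j * (1 - c) ^ (n - j) := by
  have key : ∀ lam j : ℕ, (Ncoef n (hammingNorm x) j lam : ℝ) * c ^ j * (1 - c) ^ (n - j)
      = ∑ z : Fin n → ZMod 2, (if hammingNorm z = j ∧ hammingNorm (x + z) = lam then
          c ^ hammingNorm z * (1 - c) ^ (n - hammingNorm z) else 0) := by
    intro lam j
    rw [← Finset.sum_filter]
    rw [Finset.sum_congr rfl (fun z hz => by
      simp only [mem_filter] at hz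
      rw [hz.2.1])]
    rw [sum_const, count_key, nsmul_eq_mul]
    ring
  simp_rw [key]
  rw [Finset.sum_comm]
  rw [Finset.sum_congr rfl (fun j _ => Finset.sum_comm)]
  rw [Finset.sum_comm]
  refine Finset.sum_congr rfl (fun z _ => ?_)
  symm
  rw [Finset.sum_comm]
  simp_rw [ite_and, Finset.sum_ite_eq, mem_range, Nat.lt_succ_iff, if_pos (hn_le z)]
  rw [Finset.sum_ite_eq]
  simp [Nat.lt_succ_iff]

lemma count_w (j : ℕ) :
    (Finset.univ.filter (fun z : Fin n → ZMod 2 => hammingNorm z = j)).card = n.choose j := by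
  have h : ((Finset.univ : Finset (Fin n)).powersetCard j).card = n.choose j := by
    rw [card_powersetCard, card_univ, Fintype.card_fin]
  rw [← h]
  apply card_nbij' (fun z => supp z) (fun A => ind A)
  · intro z hz
    simp only [mem_coe, mem_filter, mem_univ, true_and] at hz
    simp [mem_powersetCard, ← hn_supp, hz]
  · intro A hA
    simp only [mem_coe, mem_powersetCard] at hA
    rw [mem_coe, mem_filter]
    exact ⟨mem_univ _, by rw [hn_supp, supp_ind, hA.2]⟩
  · intro z _; exact ind_supp z
  · intro A _; exact supp_ind A

lemma sum_z_all (c : ℝ) :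
    ∑ z : Fin n → ZMod 2, c ^ hammingNorm z * (1 - c) ^ (n - hammingNorm z) = 1 := by
  have : ∑ z : Fin n → ZMod 2, c ^ hammingNorm z * (1 - c) ^ (n - hammingNorm z)
      = ∑ j ∈ range (n + 1), (n.choose j : ℝ) * (c ^ j * (1 - c) ^ (n - j)) := by
    rw [← Finset.sum_fiberwise_of_maps_to (g := fun z : Fin n → ZMod 2 => hammingNorm z)
      (t := range (n + 1)) (fun z _ => by simp [Nat.lt_succ_iff, hn_le z])]
    refine Finset.sum_congr rfl (fun j _ => ?_)
    rw [Finset.sum_congr rfl (fun z hz => by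
      simp only [mem_filter] at hz
      rw [hz.2]), sum_const, count_w, nsmul_eq_mul]
  rw [this]
  have hb := add_pow c (1 - c) n
  simp only [add_sub_cancel, one_pow] at hb
  rw [Finset.sum_congr rfl (fun j _ => by ring :
    ∀ j ∈ range (n+1), (n.choose j : ℝ) * (c ^ j * (1 - c) ^ (n - j))
      = c ^ j * (1 - c) ^ (n - j) * (n.choose j : ℝ)), ← hb]

lemma S_side (S : Finset (Fin n → ZMod 2)) (c : ℝ) (lq : ℕ) :
    (∑ x ∈ S, ∑ lam ∈ range (lq+1), ∑ j ∈ range (n+1),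
        (Ncoef n (hammingNorm x) j lam : ℝ) * c ^ j * (1 - c) ^ (n - j))
      = ∑ lam ∈ range (lq+1), ∑ γ ∈ range (n+1), ∑ j ∈ range (n+1),
          ((S.filter (fun x => hammingNorm x = γ)).card : ℝ) *
            (Ncoef n γ j lam : ℝ) * c ^ j * (1 - c) ^ (n - j) := by
  rw [← Finset.sum_fiberwise_of_maps_to (g := fun x => hammingNorm x)
        (t := range (n+1)) (fun x _ => by simp [Nat.lt_succ_iff, hn_le x])]
  have step : ∀ γ ∈ range (n+1),
      (∑ x ∈ S.filter (fun x => hammingNorm x = γ), ∑ lam ∈ range (lq+1), ∑ j ∈ range (n+1),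
        (Ncoef n (hammingNorm x) j lam : ℝ) * c ^ j * (1 - c) ^ (n - j))
      = ∑ lam ∈ range (lq+1), ∑ j ∈ range (n+1),
          ((S.filter (fun x => hammingNorm x = γ)).card : ℝ) *
            (Ncoef n γ j lam : ℝ) * c ^ j * (1 - c) ^ (n - j) := by
    intro γ _
    rw [Finset.sum_congr rfl (fun x hx => by
        simp only [mem_filter] at hx
        rw [hx.2] : ∀ x ∈ S.filter (fun x => hammingNorm x = γ),
          _ = ∑ lam ∈ range (lq+1), ∑ j ∈ range (n+1),
            (Ncoef n γ j lam : ℝ) * c ^ j * (1 - c) ^ (n - j))]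
    rw [sum_const, nsmul_eq_mul, Finset.mul_sum]
    refine Finset.sum_congr rfl (fun lam _ => ?_)
    rw [Finset.mul_sum]
    exact Finset.sum_congr rfl (fun j _ => by ring)
  rw [Finset.sum_congr rfl step, Finset.sum_comm]

lemma alpha_side (x : Fin n → ZMod 2) (c : ℝ) (lq : ℕ) :
    ∑ z : Fin n → ZMod 2, (if lq < hammingNorm (x + z) then
        c ^ hammingNorm z * (1 - c) ^ (n - hammingNorm z) else 0)
      = 1 - ∑ lam ∈ range (lq + 1), ∑ j ∈ range (n + 1),
          (Ncoef n (hammingNorm x) j lam : ℝ) * c ^ j * (1 - c) ^ (n - j) := by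
  have hsplit : (∑ z : Fin n → ZMod 2, (if lq < hammingNorm (x + z) then
        c ^ hammingNorm z * (1 - c) ^ (n - hammingNorm z) else 0))
      + (∑ z : Fin n → ZMod 2, (if hammingNorm (x + z) ≤ lq then
        c ^ hammingNorm z * (1 - c) ^ (n - hammingNorm z) else 0))
      = ∑ z : Fin n → ZMod 2, c ^ hammingNorm z * (1 - c) ^ (n - hammingNorm z) := by
    rw [← Finset.sum_add_distrib]
    refine Finset.sum_congr rfl (fun z _ => ?_)
    rcases le_or_gt (hammingNorm (x + z)) lq with h | h
    · rw [if_neg (not_lt.2 h), if_pos h]; ring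
    · rw [if_pos h, if_neg (not_le.2 h)]; ring
  have h1 := sum_z_all (n := n) c
  have h2 := sum_z_le x c lq
  linarith

/-- Proposition 1: in the asymmetric quantization scheme with
`p0 = p1 = 1/2`, with `X` uniform on the coset-leader set `S` (`N_0 = |S|`,
`E_γ = #{x ∈ S : w(x) = γ}`), noise `Z` i.i.d. Bernoulli(`c_h`) under `H_h`,
`Y = X + Z`, and the test declaring `H_0` iff `w(Y) ≤ λ_q`:
`α = 1 - (1/N_0) Σ_{λ=0}^{λ_q} Σ_{γ=0}^n Σ_{j=0}^n E_γ N(γ,j,λ) c_0^j (1-c_0)^{n-j}` and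
`β = (1/N_0) Σ_{λ=0}^{λ_q} Σ_{γ=0}^n Σ_{j=0}^n E_γ N(γ,j,λ) c_1^j (1-c_1)^{n-j}`. -/
theorem stmt3 (n : ℕ) (hn : 0 < n) (S : Finset (Fin n → ZMod 2)) (hS : S.Nonempty)
    (c0 c1 : ℝ) (hc0 : c0 ∈ Set.Ioo (0 : ℝ) 1) (hc1 : c1 ∈ Set.Ioo (0 : ℝ) 1)
    (lq : ℕ) (hlq : lq ≤ n) :
    ((1 / (S.card : ℝ)) * ∑ x ∈ S, ∑ z : Fin n → ZMod 2,
        (if lq < hammingNorm (x + z) then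
          c0 ^ hammingNorm z * (1 - c0) ^ (n - hammingNorm z) else 0))
      = 1 - (1 / (S.card : ℝ)) *
          ∑ lam ∈ Finset.range (lq + 1), ∑ γ ∈ Finset.range (n + 1),
            ∑ j ∈ Finset.range (n + 1),
              ((S.filter (fun x => hammingNorm x = γ)).card : ℝ) *
                (Ncoef n γ j lam : ℝ) * c0 ^ j * (1 - c0) ^ (n - j)
    ∧ ((1 / (S.card : ℝ)) * ∑ x ∈ S, ∑ z : Fin n → ZMod 2,
        (if hammingNorm (x + z) ≤ lq then
          c1 ^ hammingNorm z * (1 - c1) ^ (n - hammingNorm z) else 0))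
      = (1 / (S.card : ℝ)) *
          ∑ lam ∈ Finset.range (lq + 1), ∑ γ ∈ Finset.range (n + 1),
            ∑ j ∈ Finset.range (n + 1),
              ((S.filter (fun x => hammingNorm x = γ)).card : ℝ) *
                (Ncoef n γ j lam : ℝ) * c1 ^ j * (1 - c1) ^ (n - j) := by
  have hN : (S.card : ℝ) ≠ 0 := Nat.cast_ne_zero.2 (Finset.card_pos.2 hS).ne'
  constructor
  · rw [Finset.sum_congr rfl (fun x _ => alpha_side x c0 lq)]
    rw [Finset.sum_sub_distrib, Finset.sum_const, nsmul_eq_mul, mul_one]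
    rw [S_side S c0 lq, mul_sub, one_div, inv_mul_cancel₀ hN]
  · rw [Finset.sum_congr rfl (fun x _ => sum_z_le x c1 lq), S_side S c1 lq]
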